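/- Let G and H be graphs with adjacency matrices A_G and A_H, and let A_H = Σ_s μ_s F_s be the spectral decomposition of A_H (μ_s the distinct eigenvalues, F_s the orthogonal projections onto the eigenspaces with Σ_s F_s = I). Then the transition matrix of the tensor product G ⊗ H satisfies exp(-it(A_G ⊗ A_H)) = Σ_s exp(-i μ_s t A_G) ⊗ F_s. -/

import Mathlib

open Kronecker

/-- Adjacency matrix of the complete graph `K_n`, as a complex matrix. -/
noncomputable def Kadj (n : ℕ) : Matrix (Fin n) (Fin n) ℂ :=
  Matrix.of fun i j => if i = j then 0 else 1

/-- Adjacency matrix of `K_2`, indexed by `ZMod 2`. -/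
noncomputable def A2 : Matrix (ZMod 2) (ZMod 2) ℂ :=
  Matrix.of fun i j => if i = j then 0 else 1

/-- Kronecker product of a family of matrices. -/
noncomputable def kronC {d : ℕ} {n : Fin d → ℕ}
    (M : ∀ i, Matrix (Fin (n i)) (Fin (n i)) ℂ) :
    Matrix (∀ i, Fin (n i)) (∀ i, Fin (n i)) ℂ :=
  Matrix.of fun u v => ∏ i, M i (u i) (v i)

/-- `M_a = A_{K_2}^{a_1} ⊗ ⋯ ⊗ A_{K_2}^{a_r}` for `a ∈ (ℤ/2)^r`. -/
noncomputable def cube {r : ℕ} (a : Fin r → ZMod 2) :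
    Matrix (Fin r → ZMod 2) (Fin r → ZMod 2) ℂ :=
  Matrix.of fun u v => ∏ j, (if a j = 1 then A2 else 1) (u j) (v j)

/-- `A_{K_{n_1}}^{a_1} ⊗ ⋯ ⊗ A_{K_{n_d}}^{a_d}`. -/
noncomputable def compKron {d : ℕ} (n : Fin d → ℕ) (a : Fin d → ZMod 2) :
    Matrix (∀ i, Fin (n i)) (∀ i, Fin (n i)) ℂ :=
  kronC fun i => if a i = 1 then Kadj (n i) else 1

/-- Hamming weight. -/
def wt {m : ℕ} (a : Fin m → ZMod 2) : ℕ :=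
  (Finset.univ.filter fun i => a i = 1).card

section Aux

open NormedSpace

attribute [local instance] Matrix.linftyOpNormedRing Matrix.linftyOpNormedAlgebra

variable {n m : Type*} [Fintype n] [DecidableEq n] [Fintype m] [DecidableEq m]

/-- If `x * y = 0` then `exp x * y = y`. -/
lemma exp_mul_eq_self (x y : Matrix n n ℂ) (h : x * y = 0) :
    exp x * y = y := by
  have hx : exp x = ∑' N : ℕ, ((N.factorial : ℂ))⁻¹ • x ^ N := by rw [exp_eq_tsum (𝕂 := ℂ)]
  erw [hx, ← Summable.tsum_mul_right y (NormedSpace.expSeries_summable' (𝕂 := ℂ) x),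
    tsum_eq_single 0]
  · simp
  · intro b hb
    obtain ⟨c, rfl⟩ := Nat.exists_eq_succ_of_ne_zero hb
    rw [smul_mul_assoc, pow_succ, mul_assoc, h, mul_zero, smul_zero]

lemma exp_sub_one_mul_exp_sub_one (x y : Matrix n n ℂ) (h : x * y = 0) :
    (exp x - 1) * (exp y - 1) = 0 := by
  have key : (exp x - 1) * y = 0 := by
    rw [sub_mul, one_mul, exp_mul_eq_self x y h, sub_self]
  have h2 : (exp x - 1) * exp y = exp x - 1 := by
    have hy : exp y = ∑' N : ℕ, ((N.factorial : ℂ))⁻¹ • y ^ N := by rw [exp_eq_tsum (𝕂 := ℂ)]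
    erw [hy, ← Summable.tsum_mul_left (exp x - 1) (NormedSpace.expSeries_summable' (𝕂 := ℂ) y),
      tsum_eq_single 0]
    · simp
    · intro b hb
      obtain ⟨c, rfl⟩ := Nat.exists_eq_succ_of_ne_zero hb
      rw [mul_smul_comm, pow_succ', ← mul_assoc, key, zero_mul, smul_zero]
  rw [mul_sub, h2, mul_one, sub_self]

/-- `exp` of a sum of an "orthogonal" family. -/
lemma exp_sum_orth {ι : Type*} (S : Finset ι) (f : ι → Matrix n n ℂ)
    (h : ∀ s ∈ S, ∀ s' ∈ S, s ≠ s' → f s * f s' = 0) :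
    exp (∑ s ∈ S, f s) = 1 + ∑ s ∈ S, (exp (f s) - 1) := by
  classical
  induction S using Finset.induction_on with
  | empty => simp [exp_zero]
  | @insert a S ha ih =>
    rw [Finset.sum_insert ha, Finset.sum_insert ha]
    have hcomm : Commute (f a) (∑ s ∈ S, f s) := by
      unfold Commute SemiconjBy
      rw [Finset.mul_sum, Finset.sum_mul]
      refine Finset.sum_congr rfl fun s hs => ?_
      have hne : a ≠ s := fun he => ha (he ▸ hs)
      rw [h a (Finset.mem_insert_self a S) s (Finset.mem_insert_of_mem hs) hne,
        h s (Finset.mem_insert_of_mem hs) a (Finset.mem_insert_self a S) hne.symm]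
    erw [exp_add_of_commute hcomm, ih (fun s hs s' hs' hne =>
      h s (Finset.mem_insert_of_mem hs) s' (Finset.mem_insert_of_mem hs') hne)]
    have expand : ∀ s ∈ S, exp (f a) * (exp (f s) - 1) = exp (f s) - 1 := by
      intro s hs
      have hne : a ≠ s := fun he => ha (he ▸ hs)
      have h0 := exp_sub_one_mul_exp_sub_one (f a) (f s)
        (h a (Finset.mem_insert_self a S) s (Finset.mem_insert_of_mem hs) hne)
      calc exp (f a) * (exp (f s) - 1)
          = (exp (f a) - 1) * (exp (f s) - 1) + (exp (f s) - 1) := by noncomm_ring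
        _ = exp (f s) - 1 := by rw [h0, zero_add]
    erw [mul_add, mul_one, Finset.mul_sum, Finset.sum_congr rfl expand]
    abel_nf; congr 1; exact Finset.sum_congr rfl fun _ _ => add_comm _ _

/-- `exp` of a Kronecker product with an idempotent on the right. -/
lemma exp_kron_idem (B : Matrix n n ℂ) (P : Matrix m m ℂ) (hP : P * P = P) :
    exp (B ⊗ₖ P) = exp B ⊗ₖ P + (1 - (1 : Matrix n n ℂ) ⊗ₖ P) := by
  have hpow : ∀ N : ℕ, (B ⊗ₖ P) ^ (N + 1) = (B ^ (N + 1)) ⊗ₖ P := by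
    intro N
    induction N with
    | zero => simp
    | succ N ih =>
      rw [pow_succ, ih, ← Matrix.mul_kronecker_mul, hP, ← pow_succ]
  -- the right-Kronecker linear map
  let L : Matrix n n ℂ →ₗ[ℂ] Matrix (n × m) (n × m) ℂ :=
    { toFun := fun X => X ⊗ₖ P
      map_add' := fun X Y => Matrix.add_kronecker X Y P
      map_smul' := fun c X => Matrix.smul_kronecker c X P }
  have hLc : Continuous L := L.continuous_of_finiteDimensional
  let L' : Matrix n n ℂ →L[ℂ] Matrix (n × m) (n × m) ℂ := ⟨L, hLc⟩
  have hsum : Summable fun N : ℕ => (((N.factorial : ℂ))⁻¹ • B ^ N) :=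
    NormedSpace.expSeries_summable' (𝕂 := ℂ) B
  have hexpB : exp B = ∑' N : ℕ, ((N.factorial : ℂ))⁻¹ • B ^ N := by rw [exp_eq_tsum (𝕂 := ℂ)]
  have hexpBP : exp (B ⊗ₖ P) = ∑' N : ℕ, ((N.factorial : ℂ))⁻¹ • (B ⊗ₖ P) ^ N := by rw [exp_eq_tsum (𝕂 := ℂ)]
  have h1 : exp B ⊗ₖ P = ∑' N : ℕ, (((N.factorial : ℂ))⁻¹ • B ^ N) ⊗ₖ P := by
    have := L'.map_tsum hsum
    rw [hexpB]
    exact this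
  have h2 : exp (B ⊗ₖ P) =
      1 + ∑' N : ℕ, (((N + 1).factorial : ℂ))⁻¹ • ((B ^ (N + 1)) ⊗ₖ P) := by
    have hs : Summable (fun N : ℕ => ((N.factorial : ℂ))⁻¹ • (B ⊗ₖ P) ^ N) :=
      NormedSpace.expSeries_summable' (𝕂 := ℂ) (B ⊗ₖ P)
    rw [hexpBP, Summable.tsum_eq_zero_add hs]
    simp only [pow_zero, Nat.factorial_zero, Nat.cast_one, inv_one, one_smul]
    congr 1
    exact tsum_congr fun N => by rw [hpow N]
  have h3 : exp B ⊗ₖ P =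
      (1 : Matrix n n ℂ) ⊗ₖ P + ∑' N : ℕ, (((N + 1).factorial : ℂ))⁻¹ • ((B ^ (N + 1)) ⊗ₖ P) := by
    have hsum2 : Summable fun N : ℕ => (((N.factorial : ℂ))⁻¹ • B ^ N) ⊗ₖ P :=
      hsum.map L' hLc
    rw [h1, Summable.tsum_eq_zero_add hsum2]
    congr 1
    · simp
    · exact tsum_congr fun N => by rw [Matrix.smul_kronecker]
  rw [h2, h3]
  abel

end Aux

/-- if `A_H = Σ_s μ_s F_s` is the spectral decomposition of `A_H`, then
`exp(-it(A_G ⊗ A_H)) = Σ_s exp(-i μ_s t A_G) ⊗ F_s`. -/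
theorem stmt7 (nG mH k : ℕ) (AG : Matrix (Fin nG) (Fin nG) ℝ)
    (AH : Matrix (Fin mH) (Fin mH) ℝ) (hG : AG.IsSymm) (hH : AH.IsSymm)
    (μ : Fin k → ℝ) (hμ : Function.Injective μ)
    (F : Fin k → Matrix (Fin mH) (Fin mH) ℝ)
    (hdecomp : AH = ∑ s, μ s • F s)
    (hsymm : ∀ s, (F s).IsSymm)
    (hidem : ∀ s, F s * F s = F s)
    (horth : ∀ s s', s ≠ s' → F s * F s' = 0)
    (hsum : ∑ s, F s = 1) (t : ℝ) :
    NormedSpace.exp ((-Complex.I * (t : ℂ)) •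
        ((AG.map Complex.ofReal) ⊗ₖ (AH.map Complex.ofReal))) =
      ∑ s, (NormedSpace.exp ((-Complex.I * ((μ s : ℂ)) * (t : ℂ)) •
        AG.map Complex.ofReal)) ⊗ₖ ((F s).map Complex.ofReal) := by
  classical
  set A : Matrix (Fin nG) (Fin nG) ℂ := AG.map Complex.ofReal with hA
  set P : Fin k → Matrix (Fin mH) (Fin mH) ℂ := fun s => (F s).map Complex.ofReal with hP
  have hmapmul : ∀ X Y : Matrix (Fin mH) (Fin mH) ℝ,
      (X * Y).map Complex.ofReal = X.map Complex.ofReal * Y.map Complex.ofReal := by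
    intro X Y
    ext i j
    simp [Matrix.mul_apply, Matrix.map_apply]
  have hPidem : ∀ s, P s * P s = P s := fun s => by
    rw [hP, ← hmapmul, hidem s]
  have hPorth : ∀ s s', s ≠ s' → P s * P s' = 0 := fun s s' hss => by
    simp only [hP]
    rw [← hmapmul, horth s s' hss]
    ext i j
    simp [Matrix.map_apply]
  have hPsum : ∑ s, P s = 1 := by
    have h1 : ∑ s, P s = (∑ s, F s).map Complex.ofReal := by
      ext i j
      simp [hP, Matrix.map_apply, Matrix.sum_apply]
    rw [h1, hsum]
    ext i j
    simp [Matrix.map_apply, Matrix.one_apply, apply_ite]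
  -- the orthogonal family
  set f : Fin k → Matrix (Fin nG × Fin mH) (Fin nG × Fin mH) ℂ :=
    fun s => (-Complex.I * (μ s : ℂ) * (t : ℂ)) • (A ⊗ₖ P s) with hf
  have hdec : (-Complex.I * (t : ℂ)) • (A ⊗ₖ (AH.map Complex.ofReal)) = ∑ s, f s := by
    ext u v
    simp only [hf, Matrix.sum_apply, Matrix.smul_apply, Matrix.kroneckerMap_apply,
      smul_eq_mul, hdecomp, Matrix.map_apply, Matrix.smul_apply]
    push_cast
    rw [Finset.mul_sum, Finset.mul_sum]
    refine Finset.sum_congr rfl fun s _ => ?_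
    simp only [hP, Matrix.map_apply]
    ring
  have hforth : ∀ s ∈ (Finset.univ : Finset (Fin k)), ∀ s' ∈ (Finset.univ : Finset (Fin k)),
      s ≠ s' → f s * f s' = 0 := by
    intro s _ s' _ hss
    simp only [hf]
    rw [smul_mul_smul_comm, ← Matrix.mul_kronecker_mul, hPorth s s' hss,
      Matrix.kroneckerMap_zero_right _ (fun a => by simp) (A * A), smul_zero]
  rw [hdec, exp_sum_orth Finset.univ f hforth]
  have hfs : ∀ s, NormedSpace.exp (f s) =
      (NormedSpace.exp ((-Complex.I * (μ s : ℂ) * (t : ℂ)) • A)) ⊗ₖ P s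
        + (1 - (1 : Matrix (Fin nG) (Fin nG) ℂ) ⊗ₖ P s) := by
    intro s
    have : f s = ((-Complex.I * (μ s : ℂ) * (t : ℂ)) • A) ⊗ₖ P s := by
      rw [hf, Matrix.smul_kronecker]
    rw [this, exp_kron_idem _ _ (hPidem s)]
  calc (1 : Matrix (Fin nG × Fin mH) (Fin nG × Fin mH) ℂ)
        + ∑ s, (NormedSpace.exp (f s) - 1)
      = 1 + ∑ s, ((NormedSpace.exp ((-Complex.I * (μ s : ℂ) * (t : ℂ)) • A)) ⊗ₖ P s
          - (1 : Matrix (Fin nG) (Fin nG) ℂ) ⊗ₖ P s) := by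
        congr 1
        refine Finset.sum_congr rfl fun s _ => ?_
        rw [hfs s]
        abel
    _ = 1 + (∑ s, (NormedSpace.exp ((-Complex.I * (μ s : ℂ) * (t : ℂ)) • A)) ⊗ₖ P s)
          - ∑ s, (1 : Matrix (Fin nG) (Fin nG) ℂ) ⊗ₖ P s := by
        rw [Finset.sum_sub_distrib]; abel
    _ = ∑ s, (NormedSpace.exp ((-Complex.I * (μ s : ℂ) * (t : ℂ)) • A)) ⊗ₖ P s := by
        have : ∑ s, (1 : Matrix (Fin nG) (Fin nG) ℂ) ⊗ₖ P s
            = (1 : Matrix (Fin nG) (Fin nG) ℂ) ⊗ₖ (∑ s, P s) := by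
          ext u v
          simp [Matrix.sum_apply, Matrix.kroneckerMap_apply, Finset.mul_sum]
        rw [this, hPsum, Matrix.one_kronecker_one]
        abel
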